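/- Let (Ω, F, P) be a probability space, let γ ∈ (0,1], let ε : Ω → ℕ be a random variable with ε ≥ 1 almost surely, and let (r_i)_{i≥1} be a sequence of real random variables. Define the random normalization Γ := Σ_{i=1}^{ε} γ^{i-1} and assume its essential supremum esssup(Γ) is finite. Then for every real constant J, E[ ( Σ_{i=1}^{ε} γ^{i-1} (r_i − J) )² ] ≤ esssup(Γ) · E[ Σ_{i=1}^{ε} γ^{i-1} (r_i − J)² ] (both sides possibly infinite, with the inequality holding in the extended reals). -/
import Mathlib


open MeasureTheory

lemma pointwise_cs (γ : ℝ) (hγ0 : 0 < γ) (n : ℕ) (x : ℕ → ℝ) :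
    (∑ i ∈ Finset.range n, γ ^ i * x i) ^ 2 ≤
      (∑ i ∈ Finset.range n, γ ^ i) * ∑ i ∈ Finset.range n, γ ^ i * x i ^ 2 := by
  refine Finset.sum_sq_le_sum_mul_sum_of_sq_eq_mul _ (fun i _ => by positivity)
    (fun i _ => by positivity) (fun i _ => ?_)
  ring

/-- Variance inequality with stochastic horizon: if `ε ≥ 1` a.s. is the episode
length, `γ ∈ (0,1]` the discount factor, `r_i` the rewards and
`Γ = Σ_{i=1}^{ε} γ^{i-1}` has finite essential supremum, then for every real `J`,
`E[(Σ_{i=1}^{ε} γ^{i-1}(r_i − J))²] ≤ esssup(Γ) · E[Σ_{i=1}^{ε} γ^{i-1}(r_i − J)²]`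
in the extended reals. -/
theorem variance_inequality
    {Ω : Type*} [MeasurableSpace Ω] (P : Measure Ω) [IsProbabilityMeasure P]
    (γ : ℝ) (hγ0 : 0 < γ) (hγ1 : γ ≤ 1)
    (ε : Ω → ℕ) (hε : Measurable ε) (hε1 : ∀ᵐ ω ∂P, 1 ≤ ε ω)
    (r : ℕ → Ω → ℝ) (hr : ∀ i, Measurable (r i))
    (hΓ : essSup (fun ω => ENNReal.ofReal (∑ i ∈ Finset.range (ε ω), γ ^ i)) P ≠ ⊤)
    (J : ℝ) :
    ∫⁻ ω, ENNReal.ofReal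
        ((∑ i ∈ Finset.range (ε ω), γ ^ i * (r (i + 1) ω - J)) ^ 2) ∂P ≤
      essSup (fun ω => ENNReal.ofReal (∑ i ∈ Finset.range (ε ω), γ ^ i)) P *
        ∫⁻ ω, ENNReal.ofReal
          (∑ i ∈ Finset.range (ε ω), γ ^ i * (r (i + 1) ω - J) ^ 2) ∂P := by
  set M := essSup (fun ω => ENNReal.ofReal (∑ i ∈ Finset.range (ε ω), γ ^ i)) P with hM
  calc ∫⁻ ω, ENNReal.ofReal
        ((∑ i ∈ Finset.range (ε ω), γ ^ i * (r (i + 1) ω - J)) ^ 2) ∂P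
      ≤ ∫⁻ ω, M * ENNReal.ofReal
          (∑ i ∈ Finset.range (ε ω), γ ^ i * (r (i + 1) ω - J) ^ 2) ∂P := by
        refine lintegral_mono_ae ?_
        filter_upwards [ENNReal.ae_le_essSup
          (fun ω => ENNReal.ofReal (∑ i ∈ Finset.range (ε ω), γ ^ i))] with ω hω
        calc ENNReal.ofReal ((∑ i ∈ Finset.range (ε ω), γ ^ i * (r (i + 1) ω - J)) ^ 2)
            ≤ ENNReal.ofReal ((∑ i ∈ Finset.range (ε ω), γ ^ i) *
                ∑ i ∈ Finset.range (ε ω), γ ^ i * (r (i + 1) ω - J) ^ 2) :=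
              ENNReal.ofReal_le_ofReal (pointwise_cs γ hγ0 _ _)
          _ = ENNReal.ofReal (∑ i ∈ Finset.range (ε ω), γ ^ i) *
                ENNReal.ofReal (∑ i ∈ Finset.range (ε ω), γ ^ i * (r (i + 1) ω - J) ^ 2) :=
              ENNReal.ofReal_mul (Finset.sum_nonneg fun i _ => by positivity)
          _ ≤ M * ENNReal.ofReal (∑ i ∈ Finset.range (ε ω), γ ^ i * (r (i + 1) ω - J) ^ 2) :=
              mul_le_mul_left hω _
    _ = M * ∫⁻ ω, ENNReal.ofReal
          (∑ i ∈ Finset.range (ε ω), γ ^ i * (r (i + 1) ω - J) ^ 2) ∂P :=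
        lintegral_const_mul' _ _ hΓ
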